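/- The determinant of the numerically stable (scaled) extended matrix B_ex equals the determinant of A up to sign: |det B_ex| = |det A|. Here B_ex is the (3N−2)×(3N−2) real matrix acting on the concatenated variable vector (x_1,…,x_N, l_2,…,l_N, r_2,…,r_N) whose rows, in order, are the linear forms E_1,…,E_N, L_2,…,L_N, R_2,…,R_N given by E_k = l_k + x_k + exp(−β·(t_{k+1} − t_k))·r_{k+1} (with the l_k term read as 0 for k = 1 and the r_{k+1} term read as 0 for k = N), L_2 = l_2 − exp(−β·(t_2 − t_1))·x_1, L_{k+1} = l_{k+1} − exp(−β·(t_{k+1} − t_k))·(x_k + l_k) for 2 ≤ k ≤ N−1, R_N = r_N − x_N, and R_k = r_k − x_k − exp(−β·(t_{k+1} − t_k))·r_{k+1} for 2 ≤ k ≤ N−1. -/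

import Mathlib

open Matrix

noncomputable def stmt14C (N : ℕ) (t : ℕ → ℝ) (β : ℝ) :
    Matrix (Fin (N-1) ⊕ Fin (N-1)) (Fin N) ℝ :=
  fun a j => match a with
  | Sum.inl k => if j.val ≤ k.val then Real.exp (-β * (t (k.val+1) - t j.val)) else 0
  | Sum.inr k => if k.val + 1 ≤ j.val then Real.exp (-β * (t j.val - t (k.val+1))) else 0

noncomputable def stmt14PQ (N : ℕ) (t : ℕ → ℝ) (β : ℝ) :
    Matrix (Fin N) (Fin (N-1) ⊕ Fin (N-1)) ℝ :=
  fun i b => match b with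
  | Sum.inl m => if i.val = m.val + 1 then 1 else 0
  | Sum.inr m => if i.val = m.val then Real.exp (-β * (t (i.val+1) - t i.val)) else 0

noncomputable def stmt14L (N : ℕ) (t : ℕ → ℝ) (β : ℝ) : Matrix (Fin (N-1)) (Fin (N-1)) ℝ :=
  fun k m => if k = m then 1
    else if k.val = m.val + 1 then -Real.exp (-β * (t (k.val+1) - t k.val)) else 0

noncomputable def stmt14R (N : ℕ) (t : ℕ → ℝ) (β : ℝ) : Matrix (Fin (N-1)) (Fin (N-1)) ℝ :=
  fun k m => if k = m then 1
    else if m.val = k.val + 1 then -Real.exp (-β * (t (k.val+2) - t (k.val+1))) else 0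

noncomputable def stmt14A (N : ℕ) (t : ℕ → ℝ) (β : ℝ) : Matrix (Fin N) (Fin N) ℝ :=
  fun i j => Real.exp (-β * |t i.val - t j.val|)

theorem stmt14_key (N : ℕ) (hN : 2 ≤ N) (t : ℕ → ℝ)
    (ht : ∀ i j, i < j → j < N → t i < t j)
    (β : ℝ)
    (Bex : Matrix (Fin N ⊕ (Fin (N - 1) ⊕ Fin (N - 1)))
                  (Fin N ⊕ (Fin (N - 1) ⊕ Fin (N - 1))) ℝ)
    (hEx : ∀ y : (Fin N ⊕ (Fin (N - 1) ⊕ Fin (N - 1))) → ℝ,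
      (∀ i : Fin N, Bex.mulVec y (Sum.inl i) =
        (if h : 1 ≤ i.val then
            y (Sum.inr (Sum.inl ⟨i.val - 1, by have := i.isLt; exact Nat.sub_lt_sub_right h this⟩)) else 0)
        + y (Sum.inl i)
        + (if h : i.val + 1 < N then
            Real.exp (-β * (t (i.val + 1) - t i.val)) *
              y (Sum.inr (Sum.inr ⟨i.val, by exact Nat.lt_sub_of_add_lt h⟩)) else 0))
      ∧
      (∀ k : Fin (N - 1), Bex.mulVec y (Sum.inr (Sum.inl k)) =
        y (Sum.inr (Sum.inl k))
        - Real.exp (-β * (t (k.val + 1) - t k.val)) *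
            (y (Sum.inl ⟨k.val, by have := k.isLt; exact Nat.lt_of_lt_of_le this (Nat.sub_le N 1)⟩)
              + (if h : 1 ≤ k.val then
                  y (Sum.inr (Sum.inl ⟨k.val - 1, by have := k.isLt; exact Nat.lt_of_le_of_lt (Nat.sub_le _ _) this⟩)) else 0)))
      ∧
      (∀ k : Fin (N - 1), Bex.mulVec y (Sum.inr (Sum.inr k)) =
        y (Sum.inr (Sum.inr k))
        - y (Sum.inl ⟨k.val + 1, by have := k.isLt; exact Nat.add_lt_of_lt_sub this⟩)
        - (if h : k.val + 2 < N then
            Real.exp (-β * (t (k.val + 2) - t (k.val + 1))) *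
              y (Sum.inr (Sum.inr ⟨k.val + 1, by exact Nat.lt_sub_of_add_lt h⟩)) else 0))) :
    Bex * Matrix.fromBlocks 1 0 (stmt14C N t β) 1 =
      Matrix.fromBlocks (stmt14A N t β) (stmt14PQ N t β) 0
        (Matrix.fromBlocks (stmt14L N t β) 0 0 (stmt14R N t β)) := by
  set T : Matrix (Fin N ⊕ (Fin (N - 1) ⊕ Fin (N - 1)))
      (Fin N ⊕ (Fin (N - 1) ⊕ Fin (N - 1))) ℝ :=
    Matrix.fromBlocks 1 0 (stmt14C N t β) 1 with hT
  ext p q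
  have hmv : (Bex * T) p q = Bex.mulVec (fun r => T r q) p := by
    simp [Matrix.mul_apply, Matrix.mulVec, dotProduct]
  obtain ⟨h1, h2, h3⟩ := hEx (fun r => T r q)
  rw [hmv]
  rcases p with i | k | k
  · rw [h1 i]
    rcases q with j | m | m
    · have hiN := i.isLt
      have hjN := j.isLt
      simp only [hT, Matrix.fromBlocks_apply₁₁, Matrix.fromBlocks_apply₂₁, Matrix.one_apply,
        stmt14C, stmt14A, Fin.ext_iff]
      split_ifs <;>
        first
        | (exfalso; omega)
        | (have hij : (j : ℕ) < (i : ℕ) := by omega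
           have habs : |t (i : ℕ) - t (j : ℕ)| = t (i : ℕ) - t (j : ℕ) :=
             abs_of_pos (by linarith [ht j i hij hiN])
           simp only [show (i : ℕ) - 1 + 1 = (i : ℕ) from by omega, habs]
           ring)
        | (have hij : (i : ℕ) = (j : ℕ) := by omega
           simp [hij])
        | (have hij : (i : ℕ) < (j : ℕ) := by omega
           have habs : |t (i : ℕ) - t (j : ℕ)| = t (j : ℕ) - t (i : ℕ) := by
             rw [abs_sub_comm]
             exact abs_of_pos (by linarith [ht i j hij hjN])
           rw [habs, zero_add, zero_add, ← Real.exp_add]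
           congr 1
           ring)
    · have hiN := i.isLt
      have hmN := m.isLt
      simp only [hT, Matrix.fromBlocks_apply₁₂, Matrix.fromBlocks_apply₂₂,
        Matrix.fromBlocks_apply₁₁, Matrix.fromBlocks_apply₂₁, Matrix.one_apply,
        stmt14PQ, Matrix.zero_apply, Sum.inl.injEq, Sum.inr.injEq, Fin.ext_iff,
        reduceCtorEq, if_false]
      split_ifs <;> first | (exfalso; omega) | norm_num
    · have hiN := i.isLt
      have hmN := m.isLt
      simp only [hT, Matrix.fromBlocks_apply₁₂, Matrix.fromBlocks_apply₂₂,
        Matrix.fromBlocks_apply₁₁, Matrix.fromBlocks_apply₂₁, Matrix.one_apply,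
        stmt14PQ, Matrix.zero_apply, Sum.inl.injEq, Sum.inr.injEq, Fin.ext_iff,
        reduceCtorEq, if_false]
      split_ifs <;> first | (exfalso; omega) | norm_num
  · rw [h2 k]
    rcases q with j | m | m
    · have hkN := k.isLt
      have hjN := j.isLt
      simp only [hT, Matrix.fromBlocks_apply₁₁, Matrix.fromBlocks_apply₂₁, Matrix.one_apply,
        stmt14C, Matrix.zero_apply, Fin.ext_iff]
      split_ifs <;>
        first
        | (exfalso; omega)
        | (have hjk : (j : ℕ) = (k : ℕ) := by omega
           simp [hjk])
        | (have hjk : (j : ℕ) < (k : ℕ) := by omega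
           simp only [show (k : ℕ) - 1 + 1 = (k : ℕ) from by omega, zero_add, add_zero,
             mul_zero, mul_one]
           rw [← Real.exp_add,
             show -β * (t ((k : ℕ) + 1) - t (k : ℕ)) + -β * (t (k : ℕ) - t (j : ℕ))
               = -β * (t ((k : ℕ) + 1) - t (j : ℕ)) from by ring, sub_self])
        | norm_num
    · have hkN := k.isLt
      have hmN := m.isLt
      simp only [hT, Matrix.fromBlocks_apply₁₂, Matrix.fromBlocks_apply₂₂,
        Matrix.fromBlocks_apply₁₁, Matrix.fromBlocks_apply₂₁, Matrix.one_apply,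
        stmt14L, Matrix.zero_apply, Sum.inl.injEq, Sum.inr.injEq, Fin.ext_iff,
        reduceCtorEq, if_false]
      split_ifs <;> first | (exfalso; omega) | norm_num
    · have hkN := k.isLt
      have hmN := m.isLt
      simp only [hT, Matrix.fromBlocks_apply₁₂, Matrix.fromBlocks_apply₂₂,
        Matrix.fromBlocks_apply₁₁, Matrix.fromBlocks_apply₂₁, Matrix.one_apply,
        stmt14L, stmt14R, Matrix.zero_apply, Sum.inl.injEq, Sum.inr.injEq, Fin.ext_iff,
        reduceCtorEq, if_false]
      split_ifs <;> first | (exfalso; omega) | norm_num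
  · rw [h3 k]
    rcases q with j | m | m
    · have hkN := k.isLt
      have hjN := j.isLt
      simp only [hT, Matrix.fromBlocks_apply₁₁, Matrix.fromBlocks_apply₂₁, Matrix.one_apply,
        stmt14C, Matrix.zero_apply, Fin.ext_iff]
      split_ifs <;>
        first
        | (exfalso; omega)
        | (have hjk : (j : ℕ) = (k : ℕ) + 1 := by omega
           simp [hjk])
        | (have hjk : (k : ℕ) + 2 ≤ (j : ℕ) := by omega
           rw [← Real.exp_add,
             show -β * (t ((k : ℕ) + 2) - t ((k : ℕ) + 1)) + -β * (t (j : ℕ) - t ((k : ℕ) + 2))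
               = -β * (t (j : ℕ) - t ((k : ℕ) + 1)) from by ring]
           ring)
        | norm_num
    · have hkN := k.isLt
      have hmN := m.isLt
      simp only [hT, Matrix.fromBlocks_apply₁₂, Matrix.fromBlocks_apply₂₂,
        Matrix.fromBlocks_apply₁₁, Matrix.fromBlocks_apply₂₁, Matrix.one_apply,
        stmt14R, Matrix.zero_apply, Sum.inl.injEq, Sum.inr.injEq, Fin.ext_iff,
        reduceCtorEq, if_false]
      split_ifs <;> first | (exfalso; omega) | norm_num
    · have hkN := k.isLt
      have hmN := m.isLt
      simp only [hT, Matrix.fromBlocks_apply₁₂, Matrix.fromBlocks_apply₂₂,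
        Matrix.fromBlocks_apply₁₁, Matrix.fromBlocks_apply₂₁, Matrix.one_apply,
        stmt14R, Matrix.zero_apply, Sum.inl.injEq, Sum.inr.injEq, Fin.ext_iff,
        reduceCtorEq, if_false]
      split_ifs <;> first | (exfalso; omega) | norm_num


/-- `|det B_ex| = |det A|` for the numerically stable (scaled) extended
matrix of the single-exponential kernel `A i j = exp(-β |t_i - t_j|)` (`t` written
0-based and strictly increasing). `B_ex` acts on the concatenated variable vector
`(x_1,…,x_N, l_2,…,l_N, r_2,…,r_N)`, encoded by the index type
`Fin N ⊕ (Fin (N-1) ⊕ Fin (N-1))`: `Sum.inl i` holds `x_{i+1}`,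
`Sum.inr (Sum.inl k)` holds `l_{k+2}`, and `Sum.inr (Sum.inr k)` holds `r_{k+2}`
(1-based names).  Its rows are the linear forms `E_1,…,E_N, L_2,…,L_N, R_2,…,R_N`
of the statement, specified through the action of `B_ex` on every vector `y`. -/
theorem stmt_14 (N : ℕ) (hN : 2 ≤ N) (t : ℕ → ℝ)
    (ht : ∀ i j, i < j → j < N → t i < t j)
    (β : ℝ)
    (A : Matrix (Fin N) (Fin N) ℝ)
    (hA : ∀ i j : Fin N, A i j = Real.exp (-β * |t i.val - t j.val|))
    (Bex : Matrix (Fin N ⊕ (Fin (N - 1) ⊕ Fin (N - 1)))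
                  (Fin N ⊕ (Fin (N - 1) ⊕ Fin (N - 1))) ℝ)
    (hEx : ∀ y : (Fin N ⊕ (Fin (N - 1) ⊕ Fin (N - 1))) → ℝ,
      -- rows E_k :  l_k + x_k + exp(-β(t_{k+1} - t_k))·r_{k+1}
      -- (the l-term read as 0 for the first row, the r-term as 0 for the last row)
      (∀ i : Fin N, Bex.mulVec y (Sum.inl i) =
        (if h : 1 ≤ i.val then
            y (Sum.inr (Sum.inl ⟨i.val - 1, by have := i.isLt; omega⟩)) else 0)
        + y (Sum.inl i)
        + (if h : i.val + 1 < N then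
            Real.exp (-β * (t (i.val + 1) - t i.val)) *
              y (Sum.inr (Sum.inr ⟨i.val, by omega⟩)) else 0))
      ∧
      -- rows L_{k+2} :  l_{k+2} - exp(-β(t_{k+2} - t_{k+1}))·(x_{k+1} + l_{k+1})
      -- (the l_{k+1}-term read as 0 when k = 0, giving L_2 = l_2 - exp(-β(t_2 - t_1))·x_1)
      (∀ k : Fin (N - 1), Bex.mulVec y (Sum.inr (Sum.inl k)) =
        y (Sum.inr (Sum.inl k))
        - Real.exp (-β * (t (k.val + 1) - t k.val)) *
            (y (Sum.inl ⟨k.val, by have := k.isLt; omega⟩)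
              + (if h : 1 ≤ k.val then
                  y (Sum.inr (Sum.inl ⟨k.val - 1, by have := k.isLt; omega⟩)) else 0)))
      ∧
      -- rows R_{k+2} :  r_{k+2} - x_{k+2} - exp(-β(t_{k+3} - t_{k+2}))·r_{k+3}
      -- (the r_{k+3}-term read as 0 for the last row, giving R_N = r_N - x_N)
      (∀ k : Fin (N - 1), Bex.mulVec y (Sum.inr (Sum.inr k)) =
        y (Sum.inr (Sum.inr k))
        - y (Sum.inl ⟨k.val + 1, by have := k.isLt; omega⟩)
        - (if h : k.val + 2 < N then
            Real.exp (-β * (t (k.val + 2) - t (k.val + 1))) *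
              y (Sum.inr (Sum.inr ⟨k.val + 1, by omega⟩)) else 0))) :
    |Bex.det| = |A.det| := by
  have hkey := stmt14_key N hN t ht β Bex hEx
  have hdet := congrArg Matrix.det hkey
  rw [Matrix.det_mul] at hdet
  have hTdet : (Matrix.fromBlocks (1 : Matrix (Fin N) (Fin N) ℝ) 0 (stmt14C N t β) 1).det = 1 := by
    rw [Matrix.det_fromBlocks_zero₁₂, Matrix.det_one, Matrix.det_one, one_mul]
  have hL : (stmt14L N t β).det = 1 := by
    rw [Matrix.det_of_lowerTriangular (stmt14L N t β)]
    · simp [stmt14L]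
    · intro i j h
      have hij : i < j := h
      have : i.val < j.val := hij
      simp only [stmt14L]
      rw [if_neg hij.ne, if_neg (by omega)]
  have hR : (stmt14R N t β).det = 1 := by
    rw [Matrix.det_of_upperTriangular]
    · simp [stmt14R]
    · intro i j h
      have hij : j < i := h
      have : j.val < i.val := hij
      simp only [stmt14R]
      rw [if_neg hij.ne', if_neg (by omega)]
  rw [hTdet, mul_one, Matrix.det_fromBlocks_zero₂₁, Matrix.det_fromBlocks_zero₂₁,
    hL, hR, mul_one, mul_one] at hdet
  have hAA : stmt14A N t β = A := by
    ext i j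
    rw [hA]
    rfl
  rw [hdet, hAA]
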